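/- arXiv:1405.5631 — 3 statements merged into one kernel-verified Lean document; each statement's English description precedes it below -/
import Mathlib

section
/- Let m, n be positive integers, let α_0, …, α_{m−1} and β_0, …, β_{n−1} be nonnegative real numbers, and define the real polynomial c(q) := (α_{m−1}q^{m−1} + ⋯ + α_1 q + α_0)·q^n − (β_{n−1}q^{n−1} + ⋯ + β_1 q + β_0). If q_0 > 0 and c(q_0) ≥ 0, then c(q) ≥ 0 for all real q ≥ q_0. -/
/-- If `c(q) = (α_{m-1} q^{m-1} + ⋯ + α_0)·q^n - (β_{n-1} q^{n-1} + ⋯ + β_0)` with all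
`α_i, β_j ≥ 0`, and `c(q₀) ≥ 0` for some `q₀ > 0`, then `c(q) ≥ 0` for all `q ≥ q₀`. -/
theorem poly_nonneg_of_nonneg_at (m n : ℕ) (hm : 1 ≤ m) (hn : 1 ≤ n)
    (α β : ℕ → ℝ) (hα : ∀ i, 0 ≤ α i) (hβ : ∀ j, 0 ≤ β j)
    (q₀ : ℝ) (hq₀ : 0 < q₀)
    (h : 0 ≤ (∑ i ∈ Finset.range m, α i * q₀ ^ i) * q₀ ^ n -
        ∑ j ∈ Finset.range n, β j * q₀ ^ j) :
    ∀ q : ℝ, q₀ ≤ q →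
      0 ≤ (∑ i ∈ Finset.range m, α i * q ^ i) * q ^ n -
        ∑ j ∈ Finset.range n, β j * q ^ j := by
  intro q hq
  have hq0 : 0 < q := lt_of_lt_of_le hq₀ hq
  set r : ℝ := q / q₀ with hr
  have hr1 : 1 ≤ r := (one_le_div hq₀).mpr hq
  set t : ℝ := r ^ (n - 1) with ht
  have ht1 : 1 ≤ t := one_le_pow₀ hr1
  have ht0 : 0 ≤ t := le_trans zero_le_one ht1
  -- B(q) ≤ t * B(q₀)
  have hB : (∑ j ∈ Finset.range n, β j * q ^ j) ≤
      t * ∑ j ∈ Finset.range n, β j * q₀ ^ j := by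
    rw [Finset.mul_sum]
    apply Finset.sum_le_sum
    intro j hj
    have hjn : j ≤ n - 1 := Nat.le_sub_one_of_lt (Finset.mem_range.mp hj)
    have hq' : q ^ j ≤ t * q₀ ^ j := by
      have h1 : q ^ j = r ^ j * q₀ ^ j := by
        rw [hr, div_pow, div_mul_cancel₀]
        positivity
      rw [h1]
      have : r ^ j ≤ t := pow_le_pow_right₀ hr1 hjn
      nlinarith [pow_pos hq₀ j]
    calc β j * q ^ j ≤ β j * (t * q₀ ^ j) := by
          exact mul_le_mul_of_nonneg_left hq' (hβ j)
      _ = t * (β j * q₀ ^ j) := by ring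
  -- t * A(q₀) * q₀^n ≤ A(q) * q^n
  have hA : t * ((∑ i ∈ Finset.range m, α i * q₀ ^ i) * q₀ ^ n) ≤
      (∑ i ∈ Finset.range m, α i * q ^ i) * q ^ n := by
    have hsum : (∑ i ∈ Finset.range m, α i * q₀ ^ i) ≤
        ∑ i ∈ Finset.range m, α i * q ^ i := by
      apply Finset.sum_le_sum
      intro i _
      exact mul_le_mul_of_nonneg_left (pow_le_pow_left₀ hq₀.le hq i) (hα i)
    have hpow : t * q₀ ^ n ≤ q ^ n := by
      have hn1 : n = (n - 1) + 1 := (Nat.succ_pred_eq_of_pos hn).symm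
      have h1 : t * q₀ ^ n = q ^ (n - 1) * q₀ := by
        rw [ht, hr, div_pow]
        rw [hn1, pow_succ]
        field_simp
        ring_nf
        rw [Nat.add_sub_cancel_left]
      rw [h1]
      calc q ^ (n - 1) * q₀ ≤ q ^ (n - 1) * q :=
            mul_le_mul_of_nonneg_left hq (pow_nonneg hq0.le _)
        _ = q ^ ((n - 1) + 1) := (pow_succ q (n - 1)).symm
        _ = q ^ n := by rw [← hn1]
      -- done
    have hApos : 0 ≤ ∑ i ∈ Finset.range m, α i * q₀ ^ i := by
      apply Finset.sum_nonneg
      intro i _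
      exact mul_nonneg (hα i) (pow_nonneg hq₀.le i)
    calc t * ((∑ i ∈ Finset.range m, α i * q₀ ^ i) * q₀ ^ n)
        = (∑ i ∈ Finset.range m, α i * q₀ ^ i) * (t * q₀ ^ n) := by ring
      _ ≤ (∑ i ∈ Finset.range m, α i * q ^ i) * q ^ n := by
          apply mul_le_mul hsum hpow (by positivity) (le_trans hApos hsum)
  nlinarith [mul_nonneg ht0 h]
end

section
/- For every integer n ≥ 1 and every integer q ≥ 2: (1 − q^{−1})^2 ≤ 1 − q^{−1} − q^{−2} < ω(∞,q) < ω(n,q) ≤ 1 − q^{−1}, where the first inequality is strict for q ≥ 3. -/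
/-- `ω(n,q) = ∏_{i=1}^n (1 - q⁻ⁱ)`. -/
noncomputable def omegaF (n q : ℕ) : ℝ :=
  ∏ i ∈ Finset.Icc 1 n, (1 - ((q : ℝ))⁻¹ ^ i)

/-- `ω(∞,q) = ∏_{i=1}^∞ (1 - q⁻ⁱ)`. -/
noncomputable def omegaInf (q : ℕ) : ℝ :=
  ∏' i : ℕ, (1 - ((q : ℝ))⁻¹ ^ (i + 1))

/-- `c₀(∞,q) = q² (1 - ∏_{i=2}^∞ (1 - q⁻ⁱ))`. -/
noncomputable def c0Inf (q : ℕ) : ℝ :=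
  (q : ℝ) ^ 2 * (1 - ∏' i : ℕ, (1 - ((q : ℝ))⁻¹ ^ (i + 2)))

/-- `c*(q) = c₀(∞,q) + q·(ω(4,q)·c₀(∞,q²)/ω(∞,q²))·(q·log(1-q⁻²) - log(1-q⁻¹))`. -/
noncomputable def cStar (q : ℕ) : ℝ :=
  c0Inf q + (q : ℝ) * (omegaF 4 q * c0Inf (q ^ 2) / omegaInf (q ^ 2)) *
    ((q : ℝ) * Real.log (1 - ((q : ℝ))⁻¹ ^ 2) - Real.log (1 - ((q : ℝ))⁻¹))

/-- Strengthened lower bound for partial products. -/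
lemma aux_lower (x : ℝ) (hx0 : 0 ≤ x) (hx1 : x ≤ 1) (m : ℕ) :
    1 - x - x ^ 2 + x ^ 5 ≤ ∏ i ∈ Finset.Icc 1 m, (1 - x ^ i) := by
  have hx2 : (0:ℝ) ≤ 1 - x ^ 2 := by nlinarith [pow_le_one₀ hx0 hx1 (n := 2)]
  match m with
  | 0 => simp; nlinarith [pow_le_pow_of_le_one hx0 hx1 (show 1 ≤ 5 by norm_num),
      pow_le_pow_of_le_one hx0 hx1 (show 2 ≤ 5 by norm_num)]
  | 1 =>
    rw [show Finset.Icc 1 1 = {1} from rfl]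
    simp
    nlinarith [pow_le_pow_of_le_one hx0 hx1 (show 2 ≤ 5 by norm_num)]
  | (Nat.succ (Nat.succ k)) =>
    have key : ∀ m : ℕ, 2 ≤ m →
        (1 - x ^ 2) * (1 - x - x ^ 3 + x ^ (m + 1)) ≤ ∏ i ∈ Finset.Icc 1 m, (1 - x ^ i) := by
      intro m hm
      induction m, hm using Nat.le_induction with
      | base =>
        rw [show Finset.Icc 1 2 = {1, 2} from rfl]
        simp [Finset.prod_insert, Finset.mem_singleton]
        ring_nf
        nlinarith []
      | succ m hm ih =>
        rw [Finset.prod_Icc_succ_top (by omega)]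
        have h1 : x ^ (m + 1 + 1) = x ^ (m + 1) * x := by ring
        have h2 : x ^ (m + 1) ≤ x ^ 3 := pow_le_pow_of_le_one hx0 hx1 (by omega)
        have h3 : (0:ℝ) ≤ x ^ (m + 1) := pow_nonneg hx0 _
        have h4 : x ^ (m + 1) ≤ 1 := pow_le_one₀ hx0 hx1
        calc (1 - x ^ 2) * (1 - x - x ^ 3 + x ^ (m + 1 + 1))
            ≤ (1 - x ^ 2) * (1 - x - x ^ 3 + x ^ (m + 1)) * (1 - x ^ (m + 1)) := by
              nlinarith [mul_nonneg (mul_nonneg hx2 h3) (sub_nonneg.2 h2)]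
          _ ≤ (∏ i ∈ Finset.Icc 1 m, (1 - x ^ i)) * (1 - x ^ (m + 1)) := by
              have := sub_nonneg.2 h4
              nlinarith [ih]
    refine le_trans ?_ (key (k + 2) (by omega))
    have h3 : (0:ℝ) ≤ x ^ (k + 3) := pow_nonneg hx0 _
    nlinarith []

lemma aux_range_Icc (x : ℝ) (m : ℕ) :
    ∏ i ∈ Finset.range m, (1 - x ^ (i + 1)) = ∏ i ∈ Finset.Icc 1 m, (1 - x ^ i) := by
  induction m with
  | zero => simp
  | succ m ih => rw [Finset.prod_range_succ, Finset.prod_Icc_succ_top (by omega), ih]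

lemma aux_summable_log (x : ℝ) (hx0 : 0 ≤ x) (hx : x ≤ 1/2) :
    Summable fun i : ℕ => Real.log (1 - x ^ (i + 1)) := by
  rw [← summable_neg_iff]
  have hx1 : x < 1 := lt_of_le_of_lt hx (by norm_num)
  refine Summable.of_nonneg_of_le (f := fun i : ℕ => 2 * x ^ i) ?_ ?_ ?_
  · intro i
    have hy : x ^ (i + 1) ≤ x := by
      calc x ^ (i+1) ≤ x ^ 1 := pow_le_pow_of_le_one hx0 hx1.le (by omega)
        _ = x := pow_one x
    have h1 : (0:ℝ) < 1 - x ^ (i + 1) := by nlinarith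
    simp only [neg_nonneg]
    exact Real.log_nonpos (by positivity) (by nlinarith [pow_nonneg hx0 (i+1)])
  · intro i
    set y := x ^ (i + 1) with hy_def
    have hy0 : 0 ≤ y := pow_nonneg hx0 _
    have hy : y ≤ x := by
      calc x ^ (i+1) ≤ x ^ 1 := pow_le_pow_of_le_one hx0 hx1.le (by omega)
        _ = x := pow_one x
    have h1 : (0:ℝ) < 1 - y := by nlinarith
    have hlog : Real.log ((1 - y)⁻¹) ≤ (1 - y)⁻¹ - 1 :=
      Real.log_le_sub_one_of_pos (by positivity)
    rw [Real.log_inv] at hlog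
    have hinv : (1 - y) * (1 - y)⁻¹ = 1 := mul_inv_cancel₀ h1.ne'
    have h2 : (1 - y)⁻¹ - 1 ≤ 2 * y := by nlinarith [inv_nonneg.2 h1.le]
    have h3 : y ≤ x ^ i := by
      calc y = x * x ^ i := by rw [hy_def]; ring
        _ ≤ 1 * x ^ i := by
            apply mul_le_mul_of_nonneg_right (by linarith) (pow_nonneg hx0 i)
        _ = x ^ i := one_mul _
    have hfin : -Real.log (1 - y) ≤ 2 * x ^ i := by linarith
    simpa using hfin
  · exact (summable_geometric_of_lt_one hx0 hx1).mul_left 2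

lemma aux_multipliable (x : ℝ) (hx0 : 0 ≤ x) (hx : x ≤ 1/2) :
    Multipliable fun i : ℕ => 1 - x ^ (i + 1) := by
  have hx1 : x < 1 := lt_of_le_of_lt hx (by norm_num)
  have hpos : ∀ (_ : Unit) (i : ℕ), (0:ℝ) < 1 - x ^ (i + 1) := by
    intro _ i
    have : x ^ (i+1) ≤ x ^ 1 := pow_le_pow_of_le_one hx0 hx1.le (by omega)
    simpa using by nlinarith [this]
  exact Real.multipliable_of_summable_log (hpos ())
    (aux_summable_log x hx0 hx)

theorem omega_bounds (n q : ℕ) (hn : 1 ≤ n) (hq : 2 ≤ q) :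
    ((1 - (q : ℝ)⁻¹) ^ 2 ≤ 1 - (q : ℝ)⁻¹ - (q : ℝ)⁻¹ ^ 2 ∧
      (3 ≤ q → (1 - (q : ℝ)⁻¹) ^ 2 < 1 - (q : ℝ)⁻¹ - (q : ℝ)⁻¹ ^ 2)) ∧
    1 - (q : ℝ)⁻¹ - (q : ℝ)⁻¹ ^ 2 < omegaInf q ∧
    omegaInf q < omegaF n q ∧
    omegaF n q ≤ 1 - (q : ℝ)⁻¹ := by
  have hq2 : (2:ℝ) ≤ (q:ℝ) := by exact_mod_cast hq
  set x : ℝ := (q:ℝ)⁻¹ with hx_def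
  have hx0 : 0 < x := by
    rw [hx_def]; exact inv_pos.2 (by linarith)
  have hx : x ≤ 1/2 := by
    rw [hx_def, show (1:ℝ)/2 = (2:ℝ)⁻¹ by norm_num]
    exact inv_anti₀ (by norm_num) hq2
  have hx1 : x < 1 := lt_of_le_of_lt hx (by norm_num)
  -- positivity of partial products
  have hPpos : ∀ m : ℕ, 0 < ∏ i ∈ Finset.Icc 1 m, (1 - x ^ i) := by
    intro m
    apply Finset.prod_pos
    intro i hi
    have hi1 : 1 ≤ i := (Finset.mem_Icc.1 hi).1
    have : x ^ i ≤ x ^ 1 := pow_le_pow_of_le_one hx0.le hx1.le hi1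
    rw [pow_one] at this
    nlinarith
  -- antitonicity
  have hanti : Antitone (fun m : ℕ => ∏ i ∈ Finset.Icc 1 m, (1 - x ^ i)) := by
    apply antitone_nat_of_succ_le
    intro m
    rw [Finset.prod_Icc_succ_top (by omega : 1 ≤ m + 1)]
    have h1 : (0:ℝ) ≤ x ^ (m+1) := pow_nonneg hx0.le _
    nlinarith [hPpos m]
  -- convergence of partial products to the infinite product
  have hmul := aux_multipliable x hx0.le hx
  have htend : Filter.Tendsto (fun m => ∏ i ∈ Finset.Icc 1 m, (1 - x ^ i))
      Filter.atTop (nhds (omegaInf q)) := by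
    have := hmul.hasProd.tendsto_prod_nat
    rw [show (∏' i : ℕ, (1 - x ^ (i + 1))) = omegaInf q from rfl] at this
    exact this.congr (fun m => aux_range_Icc x m)
  have homF : ∀ m : ℕ, omegaF m q = ∏ i ∈ Finset.Icc 1 m, (1 - x ^ i) := fun m => rfl
  refine ⟨⟨by nlinarith, ?_⟩, ?_, ?_, ?_⟩
  · intro hq3
    have hq3' : (3:ℝ) ≤ (q:ℝ) := by exact_mod_cast hq3
    have hx3 : x ≤ 1/3 := by
      rw [hx_def, show (1:ℝ)/3 = (3:ℝ)⁻¹ by norm_num]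
      exact inv_anti₀ (by norm_num) hq3'
    nlinarith
  · -- lower bound on the infinite product
    have hlow : 1 - x - x ^ 2 + x ^ 5 ≤ omegaInf q :=
      ge_of_tendsto' htend (fun m => aux_lower x hx0.le hx1.le m)
    have h5 : 0 < x ^ 5 := by positivity
    linarith
  · -- omegaInf q < omegaF n q
    have hle : omegaInf q ≤ ∏ i ∈ Finset.Icc 1 (n+1), (1 - x ^ i) := by
      refine le_of_tendsto htend ?_
      filter_upwards [Filter.eventually_ge_atTop (n+1)] with m hm
      exact hanti hm
    have hlt : (∏ i ∈ Finset.Icc 1 (n+1), (1 - x ^ i)) < ∏ i ∈ Finset.Icc 1 n, (1 - x ^ i) := by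
      rw [Finset.prod_Icc_succ_top (by omega : 1 ≤ n + 1)]
      have h1 : (0:ℝ) < x ^ (n+1) := by positivity
      nlinarith [hPpos n]
    rw [homF n]
    exact lt_of_le_of_lt hle hlt
  · -- omegaF n q ≤ 1 - x
    rw [homF n]
    calc (∏ i ∈ Finset.Icc 1 n, (1 - x ^ i)) ≤ ∏ i ∈ Finset.Icc 1 1, (1 - x ^ i) := hanti hn
      _ = 1 - x := by simp
end

section
/- Let q be a prime power, X ∈ M(n,q), and let g be a monic polynomial of degree ≥ 1 dividing the characteristic polynomial of X such that for every monic irreducible polynomial h dividing g, the F_q[X]-module ker(h(X)^n) is cyclic. Then the number of vectors v ∈ F_q^n that are g-witnesses for X equals q^n · ∏_{h} (1 − q^{−deg h}), where the product is over all monic irreducible polynomials h dividing g; equivalently, a uniformly distributed random vector v ∈ F_q^n is a g-witness for X with probability ∏_{h | g} (1 − q^{−deg h}). -/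
set_option maxHeartbeats 1000000
set_option synthInstance.maxHeartbeats 400000

set_option linter.unusedSectionVars false

namespace CW

variable {n : ℕ} {F : Type} [Field F] [Fintype F] [DecidableEq F]

noncomputable def phi (A : Matrix (Fin n) (Fin n) F) (p : Polynomial F) :
    (Fin n → F) →ₗ[F] (Fin n → F) := Matrix.vecMulLinear (Polynomial.aeval A p)

variable (A : Matrix (Fin n) (Fin n) F)

lemma phi_apply (p : Polynomial F) (v : Fin n → F) :
    phi A p v = Matrix.vecMul v (Polynomial.aeval A p) := rfl

lemma phi_phi (p r : Polynomial F) (v : Fin n → F) :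
    phi A p (phi A r v) = phi A (r * p) v := by
  simp [phi_apply, Matrix.vecMul_vecMul, map_mul]

lemma phi_comm (p r : Polynomial F) (v : Fin n → F) :
    phi A p (phi A r v) = phi A r (phi A p v) := by
  rw [phi_phi, phi_phi, mul_comm]

lemma phi_one (v : Fin n → F) : phi A 1 v = v := by
  simp [phi_apply]

/-- the action as a linear map in the polynomial -/
noncomputable def Lp (v : Fin n → F) : Polynomial F →ₗ[F] (Fin n → F) where
  toFun p := phi A p v
  map_add' p r := by simp [phi_apply, map_add, Matrix.vecMul_add]
  map_smul' a p := by
    simp only [phi_apply, map_smul, RingHom.id_apply]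
    ext j
    simp [Matrix.vecMul, dotProduct, Finset.mul_sum, mul_left_comm]

lemma Lp_apply (v : Fin n → F) (p : Polynomial F) : Lp A v p = phi A p v := rfl

/-- cyclic submodule generated by `v` -/
noncomputable def cyc (v : Fin n → F) : Submodule F (Fin n → F) :=
  Submodule.span F (Set.range fun k : ℕ => Matrix.vecMul v (A ^ k))

lemma phi_pow_X (k : ℕ) (v : Fin n → F) :
    phi A (Polynomial.X ^ k) v = Matrix.vecMul v (A ^ k) := by
  simp [phi_apply, map_pow]

lemma cyc_eq_range (v : Fin n → F) : cyc A v = LinearMap.range (Lp A v) := by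
  apply le_antisymm
  · rw [cyc, Submodule.span_le]
    rintro x ⟨k, rfl⟩
    exact ⟨Polynomial.X ^ k, phi_pow_X A k v⟩
  · rintro x ⟨p, rfl⟩
    rw [Lp_apply]
    induction p using Polynomial.induction_on' with
    | add p r hp hr => rw [phi_apply, map_add, Matrix.vecMul_add]; exact add_mem hp hr
    | monomial k a =>
      have : (Polynomial.monomial k a : Polynomial F) = a • Polynomial.X ^ k := by
        rw [Polynomial.smul_X_eq_monomial]
      rw [this, ← Lp_apply, map_smul, Lp_apply, phi_pow_X]
      exact Submodule.smul_mem _ a (Submodule.subset_span ⟨k, rfl⟩)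

lemma mem_cyc (v x : Fin n → F) : x ∈ cyc A v ↔ ∃ p, phi A p v = x := by
  rw [cyc_eq_range]; rfl

lemma phi_mem_cyc (p : Polynomial F) (v : Fin n → F) : phi A p v ∈ cyc A v :=
  (mem_cyc A v _).2 ⟨p, rfl⟩

lemma cyc_phi_le (p : Polynomial F) (v : Fin n → F) : cyc A (phi A p v) ≤ cyc A v := by
  rw [cyc_eq_range, cyc_eq_range]
  rintro x ⟨r, rfl⟩
  exact ⟨p * r, by rw [Lp_apply, Lp_apply, ← phi_phi]⟩

lemma cyc_le_of_mem {v w : Fin n → F} (hv : v ∈ cyc A w) : cyc A v ≤ cyc A w := by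
  obtain ⟨p, rfl⟩ := (mem_cyc A w v).1 hv
  exact cyc_phi_le A p w

lemma phi_mem_cyc_of_mem {v x : Fin n → F} (p : Polynomial F) (hx : x ∈ cyc A v) :
    phi A p x ∈ cyc A v :=
  cyc_le_of_mem A hx (phi_mem_cyc A p x)

/-- kernel of the action of a polynomial -/
noncomputable def Kp (p : Polynomial F) : Submodule F (Fin n → F) := LinearMap.ker (phi A p)

lemma mem_Kp (p : Polynomial F) (v : Fin n → F) : v ∈ Kp A p ↔ phi A p v = 0 := Iff.rfl

lemma Kp_eq (h : Polynomial F) :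
    LinearMap.ker (Matrix.vecMulLinear ((Polynomial.aeval A h) ^ n)) = Kp A (h ^ n) := by
  rw [Kp, phi, map_pow]

lemma Kp_stable {p r : Polynomial F} {v : Fin n → F} (hv : v ∈ Kp A p) :
    phi A r v ∈ Kp A p := by
  rw [mem_Kp] at hv ⊢
  rw [phi_comm, hv, map_zero]

lemma mem_Kp_pow (hn : 0 < n) {h : Polynomial F} {w : Fin n → F}
    (hw : phi A h w = 0) : w ∈ Kp A (h ^ n) := by
  rw [mem_Kp]
  obtain ⟨m, hm⟩ : ∃ m, n = m + 1 := ⟨n - 1, by omega⟩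
  have hpow : h ^ n = h * h ^ m := by rw [hm, pow_succ']
  rw [hpow, ← phi_phi, hw, map_zero]

lemma phi_charpoly (v : Fin n → F) : phi A A.charpoly v = 0 := by
  rw [phi_apply, Matrix.aeval_self_charpoly, Matrix.vecMul_zero]

lemma phi_eq_zero_of_charpoly_dvd {p : Polynomial F} (hp : A.charpoly ∣ p) (v : Fin n → F) :
    phi A p v = 0 := by
  obtain ⟨s, rfl⟩ := hp
  rw [← phi_phi, phi_charpoly, map_zero]




lemma dvd_minpoly (A : Matrix (Fin n) (Fin n) F) (h : Polynomial F) (hm : h.Monic)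
    (hi : Irreducible h) (hd : h ∣ A.charpoly) : h ∣ minpoly F A := by
  classical
  set K := AlgebraicClosure F with hK
  set ι : F →+* K := algebraMap F K with hι
  set A' : Matrix (Fin n) (Fin n) K := A.map ι with hA'
  have hdeg0 : h.degree ≠ 0 := by
    intro h0
    exact hi.not_isUnit (Polynomial.isUnit_iff_degree_eq_zero.2 h0)
  have hdeg : (h.map ι).degree ≠ 0 := by
    rwa [Polynomial.degree_map_eq_of_injective ι.injective]
  obtain ⟨lam, hlam⟩ := IsAlgClosed.exists_root (h.map ι) hdeg
  have hc : (A'.charpoly).eval lam = 0 := by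
    have hdvd' : (h.map ι) ∣ (A'.charpoly) := by
      rw [hA', Matrix.charpoly_map]; exact Polynomial.map_dvd _ hd
    obtain ⟨s, hs⟩ := hdvd'
    rw [hs, Polynomial.eval_mul, hlam, zero_mul]
  have hdet : Matrix.det (lam • (1 : Matrix (Fin n) (Fin n) K) - A') = 0 := by
    have : (A'.charpoly).eval lam
        = Matrix.det ((Matrix.charmatrix A').map (Polynomial.evalRingHom lam)) := by
      rw [Matrix.charpoly, ← Polynomial.coe_evalRingHom, RingHom.map_det,
        RingHom.mapMatrix_apply]
    rw [this] at hc
    rw [← hc]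
    congr 1
    ext i j
    by_cases hij : i = j
    · subst hij
      simp [Matrix.charmatrix_apply_eq]
    · simp [Matrix.charmatrix_apply_ne _ _ _ hij, Matrix.one_apply_ne hij]
  have hμ'lam : (minpoly K A').eval lam = 0 := by
    by_contra hne
    obtain ⟨s, hs⟩ := Polynomial.X_sub_C_dvd_sub_C_eval (a := lam) (p := minpoly K A')
    have h2 := congrArg (Polynomial.aeval A') hs
    rw [map_sub, minpoly.aeval, map_mul, map_sub, Polynomial.aeval_X, Polynomial.aeval_C,
      Polynomial.aeval_C, zero_sub] at h2
    have hunit : (lam • (1 : Matrix (Fin n) (Fin n) K) - A')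
        * (((minpoly K A').eval lam)⁻¹ • Polynomial.aeval A' s) = 1 := by
      have halg : ∀ c : K, algebraMap K (Matrix (Fin n) (Fin n) K) c = c • 1 := fun c =>
        Algebra.algebraMap_eq_smul_one c
      rw [halg, halg] at h2
      have : (lam • (1 : Matrix (Fin n) (Fin n) K) - A') * Polynomial.aeval A' s
          = ((minpoly K A').eval lam) • 1 := by
        have e1 : (lam • (1 : Matrix (Fin n) (Fin n) K) - A') = -(A' - lam • 1) := by
          rw [neg_sub]
        calc (lam • (1 : Matrix (Fin n) (Fin n) K) - A') * Polynomial.aeval A' s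
            = -((A' - lam • 1) * Polynomial.aeval A' s) := by rw [e1, neg_mul]
          _ = ((minpoly K A').eval lam) • 1 := by rw [← h2, neg_neg]
      rw [Matrix.mul_smul, this, smul_smul, inv_mul_cancel₀ hne, one_smul]
    have hd2 := congrArg Matrix.det hunit
    rw [Matrix.det_mul, hdet, zero_mul, Matrix.det_one] at hd2
    exact zero_ne_one hd2
  have hintA : IsIntegral F A := Algebra.IsIntegral.isIntegral A
  have hmapzero : Polynomial.aeval A' ((minpoly F A).map ι) = 0 := by
    rw [hι, Polynomial.aeval_map_algebraMap]
    have : A' = (AlgHom.mapMatrix (Algebra.ofId F K)) A := rfl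
    rw [this, Polynomial.aeval_algHom_apply, minpoly.aeval, map_zero]
  have hμdvd : minpoly K A' ∣ (minpoly F A).map ι := minpoly.dvd K A' hmapzero
  have haevallamμ : Polynomial.aeval lam (minpoly F A) = 0 := by
    obtain ⟨t, ht⟩ := hμdvd
    have : ((minpoly F A).map ι).eval lam = 0 := by
      rw [ht, Polynomial.eval_mul, hμ'lam, zero_mul]
    rwa [Polynomial.eval_map, ← Polynomial.aeval_def] at this
  have hrooth : Polynomial.aeval lam h = 0 := by
    have : (h.map ι).eval lam = 0 := hlam
    rwa [Polynomial.eval_map, ← Polynomial.aeval_def] at this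
  have heq : h = minpoly F lam := minpoly.eq_of_irreducible_of_monic hi hrooth hm
  rw [heq]
  exact minpoly.dvd F lam haevallamμ



lemma exists_ne_zero_vecMul_eq_zero (A : Matrix (Fin n) (Fin n) F) (h : Polynomial F)
    (hm : h.Monic) (hi : Irreducible h) (hd : h ∣ A.charpoly) :
    ∃ w : Fin n → F, w ≠ 0 ∧ Matrix.vecMul w (Polynomial.aeval A h) = 0 := by
  obtain ⟨s, hμ⟩ := dvd_minpoly A h hm hi hd
  have hint : IsIntegral F A := Algebra.IsIntegral.isIntegral A
  have hμ0 : minpoly F A ≠ 0 := minpoly.ne_zero hint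
  have hh0 : h ≠ 0 := hi.ne_zero
  have hs0 : s ≠ 0 := by intro h0; rw [h0, mul_zero] at hμ; exact hμ0 hμ
  have hsA : Polynomial.aeval A s ≠ 0 := by
    intro h0
    have hd2 : minpoly F A ∣ s := minpoly.dvd F A h0
    have h3 := Polynomial.natDegree_le_of_dvd hd2 hs0
    rw [hμ, Polynomial.natDegree_mul hh0 hs0] at h3
    have := hi.natDegree_pos
    omega
  have hex : ∃ i j, Polynomial.aeval A s i j ≠ 0 := by
    by_contra hcon
    push_neg at hcon
    exact hsA (by ext i j; simpa using hcon i j)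
  obtain ⟨i, j0, hij⟩ := hex
  refine ⟨fun j => Polynomial.aeval A s i j, fun h0 => hij (congrFun h0 j0), ?_⟩
  ext j
  have hrow : Matrix.vecMul (fun j => Polynomial.aeval A s i j) (Polynomial.aeval A h) j
      = (Polynomial.aeval A s * Polynomial.aeval A h) i j := by
    rw [Matrix.mul_apply]
    rfl
  rw [hrow, ← map_mul, mul_comm s h, ← hμ, minpoly.aeval]
  simp





lemma eq_of_monic_irreducible_dvd {h h' : Polynomial F} (hm : h.Monic) (hm' : h'.Monic)
    (hi : Irreducible h) (hi' : Irreducible h') (hdvd : h ∣ h') : h = h' :=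
  Polynomial.eq_of_monic_of_associated hm hm' (hi.associated_of_dvd hi' hdvd)

lemma exists_proj (S : Finset (Polynomial F)) (hSm : ∀ p ∈ S, p.Monic)
    (hSi : ∀ p ∈ S, Irreducible p)
    (c : Polynomial F) (hc0 : c ≠ 0) (hcdeg : c.natDegree ≤ n)
    (h : Polynomial F) (hh : h ∈ S) (hhc : h ∣ c) :
    ∃ e : Polynomial F, (h ^ n ∣ e - 1) ∧ (∀ h' ∈ S, h' ≠ h → h' ^ n ∣ e) ∧
      c ∣ h ^ n * e := by
  have hhi := hSi h hh
  have hhm := hSm h hh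
  have hhp : Prime h := hhi.prime
  have hfin : FiniteMultiplicity h c := FiniteMultiplicity.of_prime_left hhp hc0
  obtain ⟨c', hc', hndvd⟩ := hfin.exists_eq_pow_mul_and_not_dvd
  set k := multiplicity h c with hk
  have hkn : k ≤ n := by
    have hdvdpow : h ^ k ∣ c := ⟨c', hc'⟩
    have h1 := Polynomial.natDegree_le_of_dvd hdvdpow hc0
    rw [Polynomial.natDegree_pow] at h1
    have h2 := hhi.natDegree_pos
    nlinarith
  set r : Polynomial F := (∏ h' ∈ S.erase h, h' ^ n) * c' with hr
  have hndvdr : ¬ h ∣ r := by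
    intro hdvd
    rcases hhp.dvd_mul.1 hdvd with hd1 | hd2
    · obtain ⟨h', hh', hdh'⟩ := (Prime.dvd_finset_prod_iff hhp _).1 hd1
      have : h = h' := eq_of_monic_irreducible_dvd hhm (hSm h' (Finset.mem_of_mem_erase hh'))
        hhi (hSi h' (Finset.mem_of_mem_erase hh')) (hhp.dvd_of_dvd_pow hdh')
      exact (Finset.ne_of_mem_erase hh') this.symm
    · exact hndvd hd2
  have hcop : IsCoprime (h ^ n) r := (hhi.coprime_iff_not_dvd.2 hndvdr).pow_left
  obtain ⟨a, b, hab⟩ := hcop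
  refine ⟨b * r, ⟨-a, by rw [← hab]; ring⟩, ?_, ?_⟩
  · intro h' hh' hne
    have : h' ^ n ∣ r := by
      apply Dvd.dvd.mul_right
      exact Finset.dvd_prod_of_mem _ (Finset.mem_erase.2 ⟨hne, hh'⟩)
    exact this.mul_left b
  · refine ⟨b * (∏ h' ∈ S.erase h, h' ^ n) * h ^ (n - k), ?_⟩
    have hpow : h ^ n = h ^ k * h ^ (n - k) := by
      rw [← pow_add, Nat.add_sub_cancel' hkn]
    calc h ^ n * (b * r) = (h ^ k * h ^ (n - k)) * (b * ((∏ h' ∈ S.erase h, h' ^ n) * c')) := by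
          rw [← hpow, hr]
      _ = (h ^ k * c') * (b * (∏ h' ∈ S.erase h, h' ^ n) * h ^ (n - k)) := by ring
      _ = c * (b * (∏ h' ∈ S.erase h, h' ^ n) * h ^ (n - k)) := by rw [← hc']


section Core

variable (A : Matrix (Fin n) (Fin n) F) (h : Polynomial F)

/-- the image `h • K_h` -/
noncomputable def Jh : Submodule F (Fin n → F) :=
  Submodule.map (phi A h) (Kp A (h ^ n))

lemma bot_of_le_Jh (hle : Kp A (h ^ n) ≤ Jh A h) : Kp A (h ^ n) = ⊥ := by
  have key : ∀ j : ℕ, ∀ x ∈ Kp A (h ^ n), ∃ u ∈ Kp A (h ^ n), x = phi A (h ^ j) u := by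
    intro j
    induction j with
    | zero => intro x hx; exact ⟨x, hx, by rw [pow_zero, phi_one]⟩
    | succ j ih =>
      intro x hx
      obtain ⟨u, hu, hxu⟩ := ih x hx
      obtain ⟨u', hu', huu'⟩ := hle hu
      refine ⟨u', hu', ?_⟩
      rw [hxu, ← huu', phi_phi, ← pow_succ']
  rw [Submodule.eq_bot_iff]
  intro x hx
  obtain ⟨u, hu, hxu⟩ := key n x hx
  rw [hxu]
  exact hu

lemma cyc_le_Jh_of_mem {w : Fin n → F} (hw : w ∈ Jh A h) : cyc A w ≤ Jh A h := by
  obtain ⟨u, hu, rfl⟩ := hw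
  rw [cyc_eq_range]
  rintro x ⟨p, rfl⟩
  rw [Lp_apply, phi_phi]
  rw [show h * p = p * h from mul_comm _ _, ← phi_phi]
  exact ⟨phi A p u, Kp_stable A hu, rfl⟩

lemma phi_stab_Jh {w : Fin n → F} (p : Polynomial F) (hw : w ∈ Jh A h) :
    phi A p w ∈ Jh A h :=
  cyc_le_Jh_of_mem A h hw (phi_mem_cyc A p w)

variable {w₀ : Fin n → F}

/-- A coprimality consequence: if `¬ h ∣ p` then `w₀` is recovered from `phi A p w₀`. -/
lemma gen_of_not_dvd (hi : Irreducible h) (hw₀ : w₀ ∈ Kp A (h ^ n)) {p : Polynomial F}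
    (hndvd : ¬ h ∣ p) : ∃ b : Polynomial F, phi A b (phi A p w₀) = w₀ := by
  have hcop : IsCoprime (h ^ n) p := (hi.coprime_iff_not_dvd.2 hndvd).pow_left
  obtain ⟨a, b, hab⟩ := hcop
  refine ⟨b, ?_⟩
  have : phi A (a * h ^ n) w₀ + phi A (b * p) w₀ = phi A 1 w₀ := by
    rw [← Lp_apply, ← Lp_apply, ← Lp_apply, ← map_add, hab]
  rw [phi_one] at this
  have h1 : phi A (a * h ^ n) w₀ = 0 := by
    rw [show a * h ^ n = h ^ n * a from mul_comm _ _, ← phi_phi, hw₀, map_zero]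
  rw [h1, zero_add] at this
  rw [phi_phi, mul_comm p b, this]

lemma Kp_le_cyc_iff (hi : Irreducible h) (hK0 : Kp A (h ^ n) ≠ ⊥)
    (hgen : cyc A w₀ = Kp A (h ^ n)) {w : Fin n → F} (hw : w ∈ Kp A (h ^ n)) :
    Kp A (h ^ n) ≤ cyc A w ↔ w ∉ Jh A h := by
  constructor
  · intro hle hmem
    exact hK0 (bot_of_le_Jh A h (hle.trans (cyc_le_Jh_of_mem A h hmem)))
  · intro hnmem hx
    have hw₀K : w₀ ∈ Kp A (h ^ n) := by
      rw [← hgen]; exact (mem_cyc A w₀ w₀).2 ⟨1, phi_one A w₀⟩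
    rw [← hgen] at hw
    obtain ⟨p, hp⟩ := (mem_cyc A w₀ w).1 hw
    have hndvd : ¬ h ∣ p := by
      rintro ⟨p', rfl⟩
      apply hnmem
      rw [← hp, mul_comm h p', ← phi_phi]
      exact ⟨phi A p' w₀, Kp_stable A hw₀K, rfl⟩
    obtain ⟨b, hb⟩ := gen_of_not_dvd A h hi hw₀K hndvd
    rw [hp] at hb
    rw [← hgen]
    apply cyc_le_of_mem
    rw [← hb]
    exact phi_mem_cyc A b w

section proj

variable {e : Polynomial F}

lemma proj_mem (heC : A.charpoly ∣ h ^ n * e) (v : Fin n → F) :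
    phi A e v ∈ Kp A (h ^ n) := by
  rw [mem_Kp, phi_phi, mul_comm e (h ^ n)]
  exact phi_eq_zero_of_charpoly_dvd A heC v

lemma proj_id (he1 : h ^ n ∣ e - 1) {v : Fin n → F} (hv : v ∈ Kp A (h ^ n)) :
    phi A e v = v := by
  obtain ⟨t, ht⟩ := he1
  have : e = 1 + h ^ n * t := by rw [← ht]; ring
  rw [this, ← Lp_apply, map_add, Lp_apply, Lp_apply, phi_one, ← phi_phi, hv, map_zero, add_zero]

lemma proj_zero {h' : Polynomial F} (hdvd : h' ^ n ∣ e) {v : Fin n → F}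
    (hv : v ∈ Kp A (h' ^ n)) : phi A e v = 0 := by
  obtain ⟨t, rfl⟩ := hdvd
  rw [← phi_phi, hv, map_zero]

lemma witness_iff (hi : Irreducible h) (hK0 : Kp A (h ^ n) ≠ ⊥)
    (hgen : cyc A w₀ = Kp A (h ^ n)) (he1 : h ^ n ∣ e - 1)
    (heC : A.charpoly ∣ h ^ n * e) (v : Fin n → F) :
    Kp A (h ^ n) ≤ cyc A v ↔ phi A e v ∉ Jh A h := by
  rw [← Kp_le_cyc_iff A h hi hK0 hgen (proj_mem A h heC v)]
  constructor
  · intro hle x hx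
    have hx1 : x = phi A e x := (proj_id A h he1 hx).symm
    obtain ⟨p, hp⟩ := (mem_cyc A v x).1 (hle hx)
    rw [hx1, ← hp, phi_comm]
    exact phi_mem_cyc A p _
  · intro hle
    exact hle.trans (cyc_phi_le A e v)

end proj

end Core

section CardFh

variable (A : Matrix (Fin n) (Fin n) F) (h : Polynomial F) {w₀ : Fin n → F}

/-- `h ⬝ K_h` as a submodule of `K_h` -/
noncomputable def Nh : Submodule F (Kp A (h ^ n)) :=
  (Jh A h).comap (Kp A (h ^ n)).subtype

lemma dvd_of_phi_mem_Jh (hi : Irreducible h) (hK0 : Kp A (h ^ n) ≠ ⊥)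
    (hgen : cyc A w₀ = Kp A (h ^ n)) {p : Polynomial F}
    (hp : phi A p w₀ ∈ Jh A h) : h ∣ p := by
  have hw₀K : w₀ ∈ Kp A (h ^ n) := by
    rw [← hgen]; exact (mem_cyc A w₀ w₀).2 ⟨1, phi_one A w₀⟩
  by_contra hndvd
  obtain ⟨b, hb⟩ := gen_of_not_dvd A h hi hw₀K hndvd
  have hw0 : w₀ ∈ Jh A h := hb ▸ phi_stab_Jh A h b hp
  have hle : Kp A (h ^ n) ≤ Jh A h := by
    rw [← hgen]; exact cyc_le_Jh_of_mem A h hw0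
  exact hK0 (bot_of_le_Jh A h hle)

lemma card_Fh (hm : h.Monic) (hi : Irreducible h) (hK0 : Kp A (h ^ n) ≠ ⊥)
    (hgen : cyc A w₀ = Kp A (h ^ n)) :
    Nat.card ((Kp A (h ^ n)) ⧸ (Nh A h)) = Fintype.card F ^ h.natDegree := by
  classical
  have hw₀K : w₀ ∈ Kp A (h ^ n) := by
    rw [← hgen]; exact (mem_cyc A w₀ w₀).2 ⟨1, phi_one A w₀⟩
  set d := h.natDegree with hd
  have hmem : ∀ p : Polynomial F, Lp A w₀ p ∈ Kp A (h ^ n) := fun p => Kp_stable A hw₀K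
  set θ₁ : Polynomial F →ₗ[F] Kp A (h ^ n) :=
    LinearMap.codRestrict (Kp A (h ^ n)) (Lp A w₀) hmem with hθ₁
  set θ : (Polynomial.degreeLT F d : Submodule F (Polynomial F)) →ₗ[F]
      ((Kp A (h ^ n)) ⧸ (Nh A h)) :=
    ((Nh A h).mkQ.comp θ₁).comp (Submodule.subtype _) with hθ
  have hθ_apply : ∀ r : (Polynomial.degreeLT F d : Submodule F (Polynomial F)),
      θ r = Submodule.Quotient.mk (θ₁ (r : Polynomial F)) := fun r => rfl
  have hinj : Function.Injective θ := by
    rw [← LinearMap.ker_eq_bot, Submodule.eq_bot_iff]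
    rintro ⟨r, hr⟩ hker
    have h0 : phi A r w₀ ∈ Jh A h := by
      have h0' : θ ⟨r, hr⟩ = 0 := hker
      rw [hθ_apply, Submodule.Quotient.mk_eq_zero] at h0'
      exact h0'
    have hdvd : h ∣ r := dvd_of_phi_mem_Jh A h hi hK0 hgen h0
    have hr0 : r = 0 := by
      by_contra hne
      have := Polynomial.degree_le_of_dvd hdvd hne
      rw [Polynomial.mem_degreeLT] at hr
      have h2 : h.degree = (d : WithBot ℕ) := Polynomial.degree_eq_natDegree hi.ne_zero
      rw [h2] at this
      exact absurd (this.trans_lt hr) (lt_irrefl _)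
    simp [hr0]
  have hsurj : Function.Surjective θ := by
    intro x
    obtain ⟨⟨y, hy⟩, rfl⟩ := Submodule.mkQ_surjective (Nh A h) x
    have hy' : y ∈ cyc A w₀ := by rw [hgen]; exact hy
    obtain ⟨p, hp⟩ := (mem_cyc A w₀ y).1 hy'
    refine ⟨⟨p %ₘ h, ?_⟩, ?_⟩
    · rw [Polynomial.mem_degreeLT, ← Polynomial.degree_eq_natDegree hi.ne_zero]
      exact Polynomial.degree_modByMonic_lt p hm
    · rw [hθ_apply, Submodule.mkQ_apply, Submodule.Quotient.eq]
      have hsub : (θ₁ (p %ₘ h) : Fin n → F) - y = -(phi A (h * (p /ₘ h)) w₀) := by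
        have hdecomp : p %ₘ h + h * (p /ₘ h) = p := Polynomial.modByMonic_add_div p h
        have : phi A (p %ₘ h) w₀ + phi A (h * (p /ₘ h)) w₀ = phi A p w₀ := by
          rw [← Lp_apply, ← Lp_apply, ← Lp_apply, ← map_add, hdecomp]
        have hval : (θ₁ (p %ₘ h) : Fin n → F) = phi A (p %ₘ h) w₀ := rfl
        rw [hval, ← hp, ← this]
        ring
      have hJh : (θ₁ (p %ₘ h) : Fin n → F) - y ∈ Jh A h := by
        rw [hsub]
        apply neg_mem
        refine ⟨phi A (p /ₘ h) w₀, Kp_stable A hw₀K, ?_⟩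
        rw [phi_phi, mul_comm]
      exact hJh
  have e1 := LinearEquiv.ofBijective θ ⟨hinj, hsurj⟩
  rw [← Nat.card_congr e1.toEquiv, Nat.card_congr (Polynomial.degreeLTEquiv F d).toEquiv,
    Nat.card_fun, Nat.card_eq_fintype_card, Nat.card_eq_fintype_card, Fintype.card_fin]

end CardFh

section Counting

lemma card_pred {V : Type} [AddCommGroup V] [Module F V] {γ : Type} {Wf : γ → Type}
    [∀ i, AddCommGroup (Wf i)] [∀ i, Module F (Wf i)]
    (Ψ : V →ₗ[F] ∀ i, Wf i) (hsurj : Function.Surjective Ψ) (P : (∀ i, Wf i) → Prop) :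
    Nat.card {v : V // P (Ψ v)}
      = Nat.card {w : ∀ i, Wf i // P w} * Nat.card (LinearMap.ker Ψ) := by
  set σ : (∀ i, Wf i) → V := Function.surjInv hsurj with hσdef
  have hσ' : ∀ w, Ψ (σ w) = w := fun w => Function.surjInv_eq hsurj w
  have e : {v : V // P (Ψ v)} ≃ {w : ∀ i, Wf i // P w} × (LinearMap.ker Ψ) := by
    refine ⟨fun v => (⟨Ψ v.1, v.2⟩, ⟨v.1 - σ (Ψ v.1), ?_⟩), fun wk => ⟨σ wk.1.1 + wk.2.1, ?_⟩,
      ?_, ?_⟩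
    · rw [LinearMap.mem_ker, map_sub, hσ', sub_self]
    · have hk : Ψ wk.2.1 = 0 := wk.2.2
      have : Ψ (σ wk.1.1 + wk.2.1) = wk.1.1 := by rw [map_add, hσ', hk, add_zero]
      rw [this]; exact wk.1.2
    · intro v
      apply Subtype.ext
      simp
    · intro wk
      have hk : Ψ wk.2.1 = 0 := wk.2.2
      have hΨ : Ψ (σ wk.1.1 + wk.2.1) = wk.1.1 := by rw [map_add, hσ', hk, add_zero]
      refine Prod.ext (Subtype.ext ?_) (Subtype.ext ?_)
      · exact hΨ
      · simp [hΨ]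
  rw [Nat.card_congr e, Nat.card_prod]

lemma card_ne_zero {α : Type} [Finite α] [Zero α] :
    Nat.card {x : α // x ≠ 0} = Nat.card α - 1 := by
  classical
  haveI : Unique {x : α // x = 0} := ⟨⟨⟨0, rfl⟩⟩, by rintro ⟨x, rfl⟩; rfl⟩
  have e := Equiv.sumCompl (fun x : α => x = 0)
  have h1 := Nat.card_congr e
  rw [Nat.card_sum, Nat.card_unique] at h1
  have h2 : Nat.card {x : α // x ≠ 0} = Nat.card {x : α // ¬ x = 0} := rfl
  omega

end Counting

end CW
open UniqueFactorizationMonoid in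
/-- If `X ∈ M(n,F)` (with `|F| = q`) is f-cyclic relative to every monic irreducible
divisor `h` of a monic divisor `g` (of degree ≥ 1) of its characteristic polynomial,
then the number of `g`-witnesses `v` for `X` equals
`qⁿ · ∏_{h ∣ g} (1 - q^{-deg h})`, the product running over the distinct monic
irreducible divisors of `g` (its normalized factors). -/
theorem card_witnesses (n q : ℕ) (F : Type) [Field F] [Fintype F] [DecidableEq F]
    (hF : Fintype.card F = q)
    (X : Matrix (Fin n) (Fin n) F) (g : Polynomial F) (hg : g.Monic)
    (hdeg : 1 ≤ g.natDegree) (hdvd : g ∣ X.charpoly)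
    (hcyc : ∀ h : Polynomial F, h.Monic → Irreducible h → h ∣ g →
      ∃ w, w ∈ LinearMap.ker (Matrix.vecMulLinear ((Polynomial.aeval X h) ^ n)) ∧
        Submodule.span F (Set.range fun k : ℕ => Matrix.vecMul w (X ^ k)) =
          LinearMap.ker (Matrix.vecMulLinear ((Polynomial.aeval X h) ^ n))) :
    (Nat.card {v : Fin n → F // ∀ h : Polynomial F, h.Monic → Irreducible h → h ∣ g →
        LinearMap.ker (Matrix.vecMulLinear ((Polynomial.aeval X h) ^ n)) ≤
          Submodule.span F (Set.range fun k : ℕ => Matrix.vecMul v (X ^ k))} : ℝ) =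
      (q : ℝ) ^ n *
        ∏ h ∈ (normalizedFactors g).toFinset, (1 - (q : ℝ)⁻¹ ^ h.natDegree) := by
  classical
  have hg0 : g ≠ 0 := hg.ne_zero
  have hc0 : X.charpoly ≠ 0 := (Matrix.charpoly_monic X).ne_zero
  have hcdeg : X.charpoly.natDegree ≤ n :=
    le_of_eq (by rw [Matrix.charpoly_natDegree_eq_dim, Fintype.card_fin])
  have hgle : g.natDegree ≤ X.charpoly.natDegree := Polynomial.natDegree_le_of_dvd hdvd hc0
  have hn : 0 < n := lt_of_lt_of_le (lt_of_lt_of_le Nat.zero_lt_one hdeg) (hgle.trans hcdeg)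
  set S : Finset (Polynomial F) := (normalizedFactors g).toFinset with hS
  have hSmem : ∀ p ∈ S, p ∈ normalizedFactors g := fun p hp => Multiset.mem_toFinset.1 hp
  have hSi : ∀ p ∈ S, Irreducible p := fun p hp =>
    irreducible_of_normalized_factor p (hSmem p hp)
  have hSm : ∀ p ∈ S, p.Monic := by
    intro p hp
    have h1 := normalize_normalized_factor p (hSmem p hp)
    have h2 : p ≠ 0 := (hSi p hp).ne_zero
    have := Polynomial.monic_normalize (R := F) h2
    rwa [h1] at this
  have hSg : ∀ p ∈ S, p ∣ g := fun p hp => dvd_of_mem_normalizedFactors (hSmem p hp)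
  have hSd : ∀ p ∈ S, p ∣ X.charpoly := fun p hp => (hSg p hp).trans hdvd
  have hmemS : ∀ h : Polynomial F, h.Monic → Irreducible h → h ∣ g → h ∈ S := by
    intro h hm hi hd
    obtain ⟨r, hr, hassoc⟩ := exists_mem_normalizedFactors_of_dvd hg0 hi hd
    have hrm : r.Monic := by
      have h1 := normalize_normalized_factor r hr
      have h2 : r ≠ 0 := (irreducible_of_normalized_factor r hr).ne_zero
      have := Polynomial.monic_normalize (R := F) h2
      rwa [h1] at this
    have : h = r := Polynomial.eq_of_monic_of_associated hm hrm hassoc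
    rw [this, hS]
    exact Multiset.mem_toFinset.2 hr
  -- cyclic generators
  have hwex : ∀ hs : {x : Polynomial F // x ∈ S}, ∃ w : Fin n → F,
      CW.cyc X w = CW.Kp X (hs.1 ^ n) := by
    intro hs
    obtain ⟨w, _, hspan⟩ := hcyc hs.1 (hSm _ hs.2) (hSi _ hs.2) (hSg _ hs.2)
    exact ⟨w, hspan.trans (CW.Kp_eq X hs.1)⟩
  choose w₀ hgen using hwex
  -- nontriviality
  have hK0 : ∀ hs : {x : Polynomial F // x ∈ S}, CW.Kp X (hs.1 ^ n) ≠ ⊥ := by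
    intro hs
    obtain ⟨w, hw0, hwker⟩ := CW.exists_ne_zero_vecMul_eq_zero X hs.1 (hSm _ hs.2)
      (hSi _ hs.2) (hSd _ hs.2)
    rw [Submodule.ne_bot_iff]
    exact ⟨w, CW.mem_Kp_pow X hn hwker, hw0⟩
  -- projector polynomials
  have heex : ∀ hs : {x : Polynomial F // x ∈ S}, ∃ e : Polynomial F,
      (hs.1 ^ n ∣ e - 1) ∧ (∀ h' ∈ S, h' ≠ hs.1 → h' ^ n ∣ e) ∧
        X.charpoly ∣ hs.1 ^ n * e :=
    fun hs => CW.exists_proj S hSm hSi X.charpoly hc0 hcdeg hs.1 hs.2 (hSd _ hs.2)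
  choose e he1 heB heC using heex
  -- the linear map Ψ
  set Ψ : (Fin n → F) →ₗ[F]
      (∀ hs : {x : Polynomial F // x ∈ S}, (CW.Kp X (hs.1 ^ n)) ⧸ (CW.Nh X hs.1)) :=
    LinearMap.pi (fun hs => (CW.Nh X hs.1).mkQ.comp
      (LinearMap.codRestrict (CW.Kp X (hs.1 ^ n)) (CW.phi X (e hs))
        (fun v => CW.proj_mem X hs.1 (heC hs) v))) with hΨ
  have hΨ_apply : ∀ v (hs : {x : Polynomial F // x ∈ S}),
      Ψ v hs = Submodule.Quotient.mk
        ⟨CW.phi X (e hs) v, CW.proj_mem X hs.1 (heC hs) v⟩ := fun v hs => rfl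
  -- surjectivity of Ψ
  have hsurj : Function.Surjective Ψ := by
    intro wvec
    have hex : ∀ hs : {x : Polynomial F // x ∈ S},
        ∃ y : CW.Kp X (hs.1 ^ n), Submodule.Quotient.mk y = wvec hs := fun hs =>
      Submodule.mkQ_surjective _ (wvec hs)
    choose y hy using hex
    refine ⟨∑ hs : {x : Polynomial F // x ∈ S}, (y hs : Fin n → F), ?_⟩
    funext hs
    rw [hΨ_apply]
    have hval : CW.phi X (e hs) (∑ hs' : {x : Polynomial F // x ∈ S}, (y hs' : Fin n → F))
        = (y hs : Fin n → F) := by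
      rw [map_sum]
      rw [Finset.sum_eq_single hs]
      · exact CW.proj_id X hs.1 (he1 hs) (y hs).2
      · intro hs' _ hne
        exact CW.proj_zero X (heB hs hs'.1 hs'.2 (fun hq => hne (Subtype.ext hq))) (y hs').2
      · intro habs
        exact absurd (Finset.mem_univ hs) habs
    rw [← hy hs]
    congr 1
    exact Subtype.ext hval
  -- transfer of the witness predicate
  have hwitness : ∀ v : Fin n → F,
      (∀ h : Polynomial F, h.Monic → Irreducible h → h ∣ g →
        LinearMap.ker (Matrix.vecMulLinear ((Polynomial.aeval X h) ^ n)) ≤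
          Submodule.span F (Set.range fun k : ℕ => Matrix.vecMul v (X ^ k)))
      ↔ (∀ hs : {x : Polynomial F // x ∈ S}, Ψ v hs ≠ 0) := by
    intro v
    have hcyc_eq : Submodule.span F (Set.range fun k : ℕ => Matrix.vecMul v (X ^ k))
        = CW.cyc X v := rfl
    constructor
    · intro hP hs
      have hle : CW.Kp X (hs.1 ^ n) ≤ CW.cyc X v := by
        rw [← CW.Kp_eq, ← hcyc_eq]
        exact hP hs.1 (hSm _ hs.2) (hSi _ hs.2) (hSg _ hs.2)
      have hnot := (CW.witness_iff X hs.1 (hSi _ hs.2) (hK0 hs) (hgen hs) (he1 hs)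
        (heC hs) v).1 hle
      intro h0
      rw [hΨ_apply, Submodule.Quotient.mk_eq_zero] at h0
      exact hnot h0
    · intro hP h hm hi hd
      let hs : {x : Polynomial F // x ∈ S} := ⟨h, hmemS h hm hi hd⟩
      have hne := hP hs
      rw [hΨ_apply, ne_eq, Submodule.Quotient.mk_eq_zero] at hne
      have hle := (CW.witness_iff X h hi (hK0 hs) (hgen hs) (he1 hs) (heC hs) v).2 hne
      rw [CW.Kp_eq, hcyc_eq]
      exact hle
  -- counting
  have hq1 : 1 ≤ q := by rw [← hF]; exact Fintype.card_pos
  have hcount1 : Nat.card {v : Fin n → F // ∀ h : Polynomial F, h.Monic → Irreducible h →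
      h ∣ g → LinearMap.ker (Matrix.vecMulLinear ((Polynomial.aeval X h) ^ n)) ≤
        Submodule.span F (Set.range fun k : ℕ => Matrix.vecMul v (X ^ k))}
      = Nat.card {v : Fin n → F // ∀ hs : {x : Polynomial F // x ∈ S}, Ψ v hs ≠ 0} :=
    Nat.card_congr (Equiv.subtypeEquivRight hwitness)
  have hcount2 : Nat.card {v : Fin n → F // ∀ hs : {x : Polynomial F // x ∈ S}, Ψ v hs ≠ 0}
      = Nat.card {w : ∀ hs : {x : Polynomial F // x ∈ S},
          (CW.Kp X (hs.1 ^ n)) ⧸ (CW.Nh X hs.1) // ∀ hs, w hs ≠ 0}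
        * Nat.card (LinearMap.ker Ψ) :=
    CW.card_pred (Wf := fun hs : {x : Polynomial F // x ∈ S} => (CW.Kp X (hs.1 ^ n)) ⧸ (CW.Nh X hs.1)) Ψ hsurj (fun w => ∀ hs, w hs ≠ 0)
  have hcardFh : ∀ hs : {x : Polynomial F // x ∈ S},
      Nat.card ((CW.Kp X (hs.1 ^ n)) ⧸ (CW.Nh X hs.1)) = q ^ hs.1.natDegree := by
    intro hs
    rw [CW.card_Fh X hs.1 (hSm _ hs.2) (hSi _ hs.2) (hK0 hs) (hgen hs), hF]
  have hcount3 : Nat.card {w : ∀ hs : {x : Polynomial F // x ∈ S},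
      (CW.Kp X (hs.1 ^ n)) ⧸ (CW.Nh X hs.1) // ∀ hs, w hs ≠ 0}
      = ∏ hs : {x : Polynomial F // x ∈ S}, (q ^ hs.1.natDegree - 1) := by
    rw [Nat.card_congr (Equiv.subtypePiEquivPi
      (β := fun hs : {x : Polynomial F // x ∈ S} => (CW.Kp X (hs.1 ^ n)) ⧸ (CW.Nh X hs.1))
      (p := fun _ b => b ≠ 0)), Nat.card_pi]
    exact Finset.prod_congr rfl (fun hs _ => by rw [CW.card_ne_zero, hcardFh hs])
  have hcount4 : q ^ n = (∏ hs : {x : Polynomial F // x ∈ S}, q ^ hs.1.natDegree)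
      * Nat.card (LinearMap.ker Ψ) := by
    have h1 := CW.card_pred (Wf := fun hs : {x : Polynomial F // x ∈ S} => (CW.Kp X (hs.1 ^ n)) ⧸ (CW.Nh X hs.1)) Ψ hsurj (fun _ => True)
    have h2 : Nat.card {v : Fin n → F // True} = q ^ n := by
      rw [Nat.card_congr (Equiv.subtypeUnivEquiv (fun _ => trivial)), Nat.card_fun,
        Nat.card_eq_fintype_card, Nat.card_eq_fintype_card, hF, Fintype.card_fin]
    have h3 : Nat.card {w : ∀ hs : {x : Polynomial F // x ∈ S},
        (CW.Kp X (hs.1 ^ n)) ⧸ (CW.Nh X hs.1) // True}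
        = ∏ hs : {x : Polynomial F // x ∈ S}, q ^ hs.1.natDegree := by
      rw [Nat.card_congr (Equiv.subtypeUnivEquiv (fun _ => trivial)), Nat.card_pi]
      exact Finset.prod_congr rfl (fun hs _ => hcardFh hs)
    rw [← h2, ← h3]
    exact h1
  -- real arithmetic
  have hqR : (0 : ℝ) < (q : ℝ) := by exact_mod_cast hq1
  rw [hcount1, hcount2, hcount3]
  have hQne : ∀ hs : {x : Polynomial F // x ∈ S}, ((q : ℝ) ^ hs.1.natDegree) ≠ 0 :=
    fun hs => pow_ne_zero _ (ne_of_gt hqR)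
  have hfactor : ∀ h' ∈ S, (1 - (q : ℝ)⁻¹ ^ h'.natDegree)
      = ((q : ℝ) ^ h'.natDegree - 1) / (q : ℝ) ^ h'.natDegree := by
    intro h' _
    rw [inv_pow]
    field_simp
  have hcast4 : ((q : ℝ)) ^ n = (∏ hs : {x : Polynomial F // x ∈ S}, (q : ℝ) ^ hs.1.natDegree)
      * (Nat.card (LinearMap.ker Ψ) : ℝ) := by
    have := congrArg (fun m : ℕ => (m : ℝ)) hcount4
    push_cast at this
    exact this
  have hcastprod : ((∏ hs : {x : Polynomial F // x ∈ S}, (q ^ hs.1.natDegree - 1) : ℕ) : ℝ)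
      = ∏ hs : {x : Polynomial F // x ∈ S}, ((q : ℝ) ^ hs.1.natDegree - 1) := by
    rw [Nat.cast_prod]
    refine Finset.prod_congr rfl ?_
    intro hs _
    have h1 : 1 ≤ q ^ hs.1.natDegree := Nat.one_le_pow _ _ hq1
    rw [Nat.cast_sub h1, Nat.cast_pow, Nat.cast_one]
  have hprod_eq1 : ∏ h' ∈ S, ((q : ℝ) ^ h'.natDegree - 1)
      = ∏ hs : {x : Polynomial F // x ∈ S}, ((q : ℝ) ^ hs.1.natDegree - 1) :=
    (Finset.prod_coe_sort S _).symm
  have hprod_eq2 : ∏ h' ∈ S, ((q : ℝ) ^ h'.natDegree)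
      = ∏ hs : {x : Polynomial F // x ∈ S}, ((q : ℝ) ^ hs.1.natDegree) :=
    (Finset.prod_coe_sort S _).symm
  have hQprodne : (∏ hs : {x : Polynomial F // x ∈ S}, ((q : ℝ) ^ hs.1.natDegree)) ≠ 0 :=
    Finset.prod_ne_zero_iff.2 (fun hs _ => hQne hs)
  rw [Nat.cast_mul, hcastprod, Finset.prod_congr rfl hfactor, Finset.prod_div_distrib,
    hprod_eq1, hprod_eq2, hcast4]
  field_simp
end
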